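/- Let n, m be positive integers and let r ∈ ℝ^n, c ∈ ℝ^m be vectors with nonnegative entries satisfying ‖r‖₁ ≤ 1 and ‖c‖₁ ≤ 1, and let μ > 0 be a real number such that μ·r has all integer entries and μ·c has all integer entries. If X ∈ ℝ^{n×m} satisfies X_{ij} ≥ 0 for all i,j, X·1 = r, and ‖Xᵀ·1 − c‖₁ ≤ 1/(2μ), then there exists a matrix X̂ ∈ ℝ^{n×m} with 0 ≤ X̂_{ij} ≤ X_{ij} for all i ∈ [n], j ∈ [m], such that X̂·1 = r/2 and X̂ᵀ·1 = c/2. -/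

import Mathlib

open MeasureTheory Set Finset

private def rcmap (n m : ℕ) : (Fin n → Fin m → ℝ) →ₗ[ℝ] (Fin n → ℝ) × (Fin m → ℝ) where
  toFun Y := (fun i => ∑ j, Y i j, fun j => ∑ i, Y i j)
  map_add' Y Z := by
    refine Prod.ext ?_ ?_ <;> funext k <;> simp [Finset.sum_add_distrib]
  map_smul' a Y := by
    refine Prod.ext ?_ ?_ <;> funext k <;> simp [Finset.mul_sum]

private lemma rcmap_apply (n m : ℕ) (Y : Fin n → Fin m → ℝ) :
    rcmap n m Y = ((fun i => ∑ j, Y i j), fun j => ∑ i, Y i j) := rfl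

private lemma clm_pair_apply {k l : ℕ} (f : ((Fin k → ℝ) × (Fin l → ℝ)) →L[ℝ] ℝ)
    (w : Fin k → ℝ) (z : Fin l → ℝ) :
    f (w, z) = ∑ i, w i * f ((fun i' => if i = i' then 1 else 0), 0)
      + ∑ j, z j * f (0, (fun j' => if j = j' then 1 else 0)) := by
  have h1 : (w, z) =
      (∑ i, w i • (((fun i' => if i = i' then (1:ℝ) else 0) : Fin k → ℝ), (0 : Fin l → ℝ)))
      + ∑ j, z j • ((0 : Fin k → ℝ), ((fun j' => if j = j' then (1:ℝ) else 0) : Fin l → ℝ)) := by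
    refine Prod.ext ?_ ?_
    · simp only [Prod.fst_add, Prod.fst_sum, Prod.smul_fst]
      simp only [smul_zero, Finset.sum_const_zero, add_zero]
      exact pi_eq_sum_univ w
    · simp only [Prod.snd_add, Prod.snd_sum, Prod.smul_snd]
      simp only [smul_zero, Finset.sum_const_zero, zero_add]
      exact pi_eq_sum_univ z
  rw [h1, map_add, map_sum, map_sum]
  congr 1 <;> exact Finset.sum_congr rfl fun x _ => by rw [_root_.map_smul]; rfl

private lemma sum_int' {ι : Type*} (μ : ℝ) (f : ι → ℝ) (h : ∀ i, ∃ k : ℤ, μ * f i = k)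
    (T : Finset ι) : ∃ k : ℤ, μ * ∑ i ∈ T, f i = k := by
  classical
  choose g hg using h
  exact ⟨∑ i ∈ T, g i, by rw [Finset.mul_sum]; push_cast; exact Finset.sum_congr rfl fun i _ => hg i⟩

private lemma inteq' {μ a b : ℝ} (hμ : 0 < μ) (ha : ∃ k : ℤ, μ * a = k) (hb : ∃ k : ℤ, μ * b = k)
    (h : |a - b| < 1 / μ) : a = b := by
  obtain ⟨k, hk⟩ := ha; obtain ⟨l, hl⟩ := hb
  have h1 : |(k : ℝ) - l| < 1 := by
    rw [← hk, ← hl, ← mul_sub, abs_mul, abs_of_pos hμ]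
    calc μ * |a - b| < μ * (1 / μ) := by exact mul_lt_mul_of_pos_left h hμ
    _ = 1 := by field_simp
  have h2 : k = l := by
    have h3 : |k - l| < 1 := by exact_mod_cast (by push_cast; exact h1 : |((k - l : ℤ) : ℝ)| < 1)
    rw [abs_lt] at h3
    omega
  have : μ * a = μ * b := by rw [hk, hl, h2]
  exact mul_left_cancel₀ hμ.ne' this

private lemma intgap' {μ a b : ℝ} (hμ : 0 < μ) (ha : ∃ k : ℤ, μ * a = k) (hb : ∃ k : ℤ, μ * b = k)
    (h : a < b) : a + 1 / μ ≤ b := by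
  obtain ⟨k, hk⟩ := ha; obtain ⟨l, hl⟩ := hb
  have hkl : (k : ℝ) < l := by rw [← hk, ← hl]; exact mul_lt_mul_of_pos_left h hμ
  have : (k : ℝ) + 1 ≤ l := by exact_mod_cast (by exact_mod_cast hkl : k < l)
  rw [← hk, ← hl] at this
  have hinv : μ * (1 / μ) = 1 := by field_simp
  nlinarith
private lemma cut_ineq' {n m : ℕ} (r : Fin n → ℝ) (c : Fin m → ℝ)
    (μ : ℝ) (hμ : 0 < μ)
    (hrint : ∀ i, ∃ k : ℤ, μ * r i = k) (hcint : ∀ j, ∃ k : ℤ, μ * c j = k)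
    (X : Matrix (Fin n) (Fin m) ℝ) (hXnn : ∀ i j, 0 ≤ X i j)
    (hXrow : ∀ i, ∑ j, X i j = r i)
    (hXcol : ∑ j, |(∑ i, X i j) - c j| ≤ 1 / (2 * μ))
    (A : Finset (Fin n)) (B : Finset (Fin m)) :
    ∑ j ∈ B, c j / 2 ≤ ∑ i ∈ Aᶜ, r i / 2 + ∑ i ∈ A, ∑ j ∈ B, X i j := by
  classical
  have h1 : ∑ i ∈ A, ∑ j ∈ B, X i j + ∑ i ∈ Aᶜ, ∑ j ∈ B, X i j = ∑ j ∈ B, ∑ i, X i j := by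
    rw [Finset.sum_add_sum_compl, Finset.sum_comm]
  have h2 : ∑ i ∈ Aᶜ, ∑ j ∈ B, X i j ≤ ∑ i ∈ Aᶜ, r i := by
    refine Finset.sum_le_sum fun i _ => ?_
    rw [← hXrow i]
    exact Finset.sum_le_sum_of_subset_of_nonneg (Finset.subset_univ B) fun j _ _ => hXnn i j
  have h3 : ∑ j ∈ B, c j - 1 / (2 * μ) ≤ ∑ j ∈ B, ∑ i, X i j := by
    have e1 : ∑ j ∈ B, (c j - ∑ i, X i j) ≤ ∑ j, |(∑ i, X i j) - c j| := by
      calc ∑ j ∈ B, (c j - ∑ i, X i j) ≤ ∑ j ∈ B, |(∑ i, X i j) - c j| :=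
            Finset.sum_le_sum fun j _ => by rw [abs_sub_comm]; exact le_abs_self _
        _ ≤ ∑ j, |(∑ i, X i j) - c j| :=
            Finset.sum_le_sum_of_subset_of_nonneg (Finset.subset_univ B) fun j _ _ => abs_nonneg _
    rw [Finset.sum_sub_distrib] at e1
    linarith
  have hcutnn : 0 ≤ ∑ i ∈ A, ∑ j ∈ B, X i j :=
    Finset.sum_nonneg fun i _ => Finset.sum_nonneg fun j _ => hXnn i j
  rw [← Finset.sum_div, ← Finset.sum_div]
  by_cases hcs : ∑ j ∈ B, c j ≤ ∑ i ∈ Aᶜ, r i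
  · linarith
  · push_neg at hcs
    have hgap : ∑ i ∈ Aᶜ, r i + 1 / μ ≤ ∑ j ∈ B, c j :=
      intgap' hμ (sum_int' μ r hrint Aᶜ) (sum_int' μ c hcint B) hcs
    have h2μ : 2 * (1 / (2 * μ)) = 1 / μ := by field_simp
    linarith
private lemma dual_ineq' {n m : ℕ} (r : Fin n → ℝ) (c : Fin m → ℝ)
    (X : Matrix (Fin n) (Fin m) ℝ)
    (hsum : ∑ j, c j = ∑ i, r i)
    (hcut : ∀ (A : Finset (Fin n)) (B : Finset (Fin m)),
      ∑ j ∈ B, c j / 2 ≤ ∑ i ∈ Aᶜ, r i / 2 + ∑ i ∈ A, ∑ j ∈ B, X i j)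
    (u : Fin n → ℝ) (v : Fin m → ℝ) :
    ∑ i, (r i / 2) * u i + ∑ j, (c j / 2) * v j ≤ ∑ i, ∑ j, X i j * max (u i + v j) 0 := by
  classical
  set S := ∑ i, r i with hS
  set M : ℝ := 1 + ∑ i, |u i| + ∑ j, |v j| with hMdef
  have hsu : 0 ≤ ∑ i, |u i| := Finset.sum_nonneg fun i _ => abs_nonneg _
  have hsv : 0 ≤ ∑ j, |v j| := Finset.sum_nonneg fun j _ => abs_nonneg _
  have habsu : ∀ i, |u i| ≤ M := by
    intro i
    have h1 : |u i| ≤ ∑ i, |u i| :=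
      Finset.single_le_sum (fun i _ => abs_nonneg (u i)) (Finset.mem_univ i)
    simp only [hMdef]; linarith
  have habsv : ∀ j, |v j| ≤ M := by
    intro j
    have h1 : |v j| ≤ ∑ j, |v j| :=
      Finset.single_le_sum (fun j _ => abs_nonneg (v j)) (Finset.mem_univ j)
    simp only [hMdef]; linarith
  have hM0 : 0 < M := by simp only [hMdef]; linarith
  set ν := volume.restrict (Ioc (-M) M) with hν
  have hfin : IsFiniteMeasure ν := ⟨by rw [hν, Measure.restrict_apply_univ]; exact measure_Ioc_lt_top⟩
  have hind_int : ∀ s : Set ℝ, MeasurableSet s → Integrable (s.indicator fun _ => (1:ℝ)) ν := by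
    intro s hs
    rw [integrable_indicator_iff hs]
    refine integrableOn_const (ne_of_lt ?_)
    rw [hν, Measure.restrict_apply hs]
    exact lt_of_le_of_lt (measure_mono inter_subset_right) measure_Ioc_lt_top
  have hint_val : ∀ s : Set ℝ, MeasurableSet s →
      ∫ t, s.indicator (fun _ => (1:ℝ)) t ∂ν = (volume (s ∩ Ioc (-M) M)).toReal := by
    intro s hs
    rw [integral_indicator_const (1:ℝ) hs, hν, measureReal_def, Measure.restrict_apply hs, smul_eq_mul, mul_one]
  have hvol1 : ∀ i j, (volume (Ioo (-v j) (u i) ∩ Ioc (-M) M)).toReal = max (u i + v j) 0 := by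
    intro i j
    have h1 := abs_le.1 (habsu i); have h2 := abs_le.1 (habsv j)
    have hseq : Ioo (-v j) (u i) ∩ Ioc (-M) M = Ioo (-v j) (u i) := by
      refine inter_eq_left.2 fun t ht => ?_
      exact ⟨by rcases ht with ⟨a, b⟩; linarith, by rcases ht with ⟨a, b⟩; linarith⟩
    rw [hseq, Real.volume_Ioo, ENNReal.toReal_ofReal']
    congr 1; ring
  have hvol2 : ∀ i, (volume (Iio (u i) ∩ Ioc (-M) M)).toReal = u i + M := by
    intro i
    have h1 := abs_le.1 (habsu i)
    have hseq : Iio (u i) ∩ Ioc (-M) M = Ioo (-M) (u i) := by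
      ext t
      simp only [Set.mem_inter_iff, Set.mem_Iio, Set.mem_Ioc, Set.mem_Ioo]
      constructor
      · rintro ⟨h, h2, h3⟩; exact ⟨h2, h⟩
      · rintro ⟨h2, h⟩; exact ⟨h, h2, by linarith⟩
    rw [hseq, Real.volume_Ioo, ENNReal.toReal_ofReal (by linarith)]
    ring
  have hvol3 : ∀ j, (volume (Ioi (-v j) ∩ Ioc (-M) M)).toReal = M + v j := by
    intro j
    have h1 := abs_le.1 (habsv j)
    have hseq : Ioi (-v j) ∩ Ioc (-M) M = Ioc (-v j) M := by
      ext t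
      simp only [Set.mem_inter_iff, Set.mem_Ioi, Set.mem_Ioc]
      constructor
      · rintro ⟨h, _, h3⟩; exact ⟨h, h3⟩
      · rintro ⟨h, h3⟩; exact ⟨h, by linarith, h3⟩
    rw [hseq, Real.volume_Ioc, ENNReal.toReal_ofReal (by linarith)]
    ring
  set F1 : ℝ → ℝ := fun t => ∑ i, ∑ j, X i j * (Ioo (-v j) (u i)).indicator (fun _ => (1:ℝ)) t with hF1
  set F2 : ℝ → ℝ := fun t => ∑ i, (r i / 2) * (Iio (u i)).indicator (fun _ => (1:ℝ)) t with hF2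
  set F3 : ℝ → ℝ := fun t => ∑ j, (c j / 2) * (Ioi (-v j)).indicator (fun _ => (1:ℝ)) t with hF3
  have hi1 : Integrable F1 ν :=
    integrable_finset_sum _ fun i _ =>
      integrable_finset_sum _ fun j _ => (hind_int _ measurableSet_Ioo).const_mul _
  have hi2 : Integrable F2 ν :=
    integrable_finset_sum _ fun i _ => (hind_int _ measurableSet_Iio).const_mul _
  have hi3 : Integrable F3 ν :=
    integrable_finset_sum _ fun j _ => (hind_int _ measurableSet_Ioi).const_mul _
  have hI1 : ∫ t, F1 t ∂ν = ∑ i, ∑ j, X i j * max (u i + v j) 0 := by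
    refine (integral_finset_sum _ fun i _ =>
      integrable_finset_sum _ fun j _ => (hind_int _ measurableSet_Ioo).const_mul _).trans ?_
    refine Finset.sum_congr rfl fun i _ => ?_
    refine (integral_finset_sum _ fun j _ => (hind_int _ measurableSet_Ioo).const_mul _).trans ?_
    refine Finset.sum_congr rfl fun j _ => ?_
    rw [integral_const_mul, hint_val _ measurableSet_Ioo, hvol1]
  have hI2 : ∫ t, F2 t ∂ν = ∑ i, (r i / 2) * (u i + M) := by
    rw [integral_finset_sum _ fun i _ => (hind_int _ measurableSet_Iio).const_mul _]
    refine Finset.sum_congr rfl fun i _ => ?_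
    rw [integral_const_mul, hint_val _ measurableSet_Iio, hvol2]
  have hI3 : ∫ t, F3 t ∂ν = ∑ j, (c j / 2) * (M + v j) := by
    rw [integral_finset_sum _ fun j _ => (hind_int _ measurableSet_Ioi).const_mul _]
    refine Finset.sum_congr rfl fun j _ => ?_
    rw [integral_const_mul, hint_val _ measurableSet_Ioi, hvol3]
  have hpt : ∀ t, F2 t + F3 t ≤ F1 t + S / 2 := by
    intro t
    set A : Finset (Fin n) := Finset.univ.filter (fun i => t < u i) with hA
    set B : Finset (Fin m) := Finset.univ.filter (fun j => -v j < t) with hB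
    have e2 : F2 t = ∑ i ∈ A, r i / 2 := by
      rw [hA, Finset.sum_filter, hF2]
      refine Finset.sum_congr rfl fun i _ => ?_
      by_cases h : t < u i <;> simp [Set.indicator_apply, Set.mem_Iio, h]
    have e3 : F3 t = ∑ j ∈ B, c j / 2 := by
      rw [hB, Finset.sum_filter, hF3]
      refine Finset.sum_congr rfl fun j _ => ?_
      by_cases h : -v j < t <;> simp [Set.indicator_apply, Set.mem_Ioi, h]
    have e1 : F1 t = ∑ i ∈ A, ∑ j ∈ B, X i j := by
      rw [hA, Finset.sum_filter, hF1]
      refine Finset.sum_congr rfl fun i _ => ?_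
      by_cases h : t < u i
      · simp only [if_pos h]
        rw [hB, Finset.sum_filter]
        refine Finset.sum_congr rfl fun j _ => ?_
        by_cases h2 : -v j < t <;> simp [Set.indicator_apply, Set.mem_Ioo, h, h2]
      · simp only [if_neg h]
        refine Finset.sum_eq_zero fun j _ => ?_
        simp [Set.indicator_apply, Set.mem_Ioo, h]
    have hc := hcut A B
    have hsplit : ∑ i ∈ A, r i / 2 + ∑ i ∈ Aᶜ, r i / 2 = S / 2 := by
      rw [Finset.sum_add_sum_compl, ← Finset.sum_div]
    rw [e1, e2, e3]
    linarith
  have hmono : ∫ t, F2 t + F3 t ∂ν ≤ ∫ t, F1 t + S / 2 ∂ν :=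
    integral_mono (hi2.add hi3) (hi1.add (integrable_const _)) fun t => hpt t
  rw [integral_add hi2 hi3, hI2, hI3, integral_add hi1 (integrable_const _), hI1,
    integral_const] at hmono
  have hνuniv : (ν Set.univ).toReal = 2 * M := by
    rw [hν, Measure.restrict_apply_univ, Real.volume_Ioc, ENNReal.toReal_ofReal (by linarith)]
    ring
  rw [measureReal_def, hνuniv, smul_eq_mul] at hmono
  have e2a : ∑ i, (r i / 2) * (u i + M) = ∑ i, ((r i / 2) * u i + M / 2 * r i) :=
    Finset.sum_congr rfl fun i _ => by ring
  have e2' : ∑ i, (r i / 2) * (u i + M) = ∑ i, (r i / 2) * u i + M / 2 * S := by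
    rw [e2a, Finset.sum_add_distrib, ← Finset.mul_sum, ← hS]
  have e3a : ∑ j, (c j / 2) * (M + v j) = ∑ j, ((c j / 2) * v j + M / 2 * c j) :=
    Finset.sum_congr rfl fun j _ => by ring
  have e3' : ∑ j, (c j / 2) * (M + v j) = ∑ j, (c j / 2) * v j + M / 2 * S := by
    rw [e3a, Finset.sum_add_distrib, ← Finset.mul_sum, hsum]
  rw [e2', e3'] at hmono
  linarith

/-- An approximately feasible `X` contains half of a truly feasible solution. -/
theorem stmt_1 (n m : ℕ) (hn : 0 < n) (hm : 0 < m)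
    (r : Fin n → ℝ) (c : Fin m → ℝ)
    (hr : ∀ i, 0 ≤ r i) (hc : ∀ j, 0 ≤ c j)
    (hr1 : ∑ i, |r i| ≤ 1) (hc1 : ∑ j, |c j| ≤ 1)
    (μ : ℝ) (hμ : 0 < μ)
    (hrint : ∀ i, ∃ k : ℤ, μ * r i = k) (hcint : ∀ j, ∃ k : ℤ, μ * c j = k)
    (X : Matrix (Fin n) (Fin m) ℝ) (hXnn : ∀ i j, 0 ≤ X i j)
    (hXrow : ∀ i, ∑ j, X i j = r i)
    (hXcol : ∑ j, |(∑ i, X i j) - c j| ≤ 1 / (2 * μ)) :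
    ∃ Xhat : Matrix (Fin n) (Fin m) ℝ,
      (∀ i j, 0 ≤ Xhat i j ∧ Xhat i j ≤ X i j) ∧
      (∀ i, ∑ j, Xhat i j = r i / 2) ∧ (∀ j, ∑ i, Xhat i j = c j / 2) := by
  classical
  have hbsum : ∑ j, ∑ i, X i j = ∑ i, r i := by
    rw [Finset.sum_comm]; exact Finset.sum_congr rfl fun i _ => hXrow i
  have hsum : ∑ j, c j = ∑ i, r i := by
    have h1 : |∑ j, c j - ∑ i, r i| ≤ 1 / (2 * μ) := by
      rw [← hbsum, ← Finset.sum_sub_distrib]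
      refine le_trans (Finset.abs_sum_le_sum_abs _ _) (le_trans (le_of_eq ?_) hXcol)
      exact Finset.sum_congr rfl fun j _ => abs_sub_comm _ _
    have h2 : 1 / (2 * μ) < 1 / μ := one_div_lt_one_div_of_lt hμ (by linarith)
    exact inteq' hμ (sum_int' μ c hcint Finset.univ) (sum_int' μ r hrint Finset.univ)
      (lt_of_le_of_lt h1 h2)
  have hcut := fun A B => cut_ineq' r c μ hμ hrint hcint X hXnn hXrow hXcol A B
  have hdual := dual_ineq' r c X hsum hcut
  set Cset : Set (Fin n → Fin m → ℝ) :=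
    Set.univ.pi (fun i => Set.univ.pi fun j => Set.Icc 0 (X i j)) with hCset
  have hmemC : ∀ Y : Fin n → Fin m → ℝ, Y ∈ Cset ↔ ∀ i j, 0 ≤ Y i j ∧ Y i j ≤ X i j := by
    intro Y
    simp only [hCset, Set.mem_pi, Set.mem_univ, forall_true_left, Set.mem_Icc, true_implies,
      Pi.le_def]
  have hφc : Continuous (rcmap n m) := (rcmap n m).continuous_of_finiteDimensional
  have hKconv : Convex ℝ (rcmap n m '' Cset) :=
    (convex_pi fun i _ => convex_pi fun j _ => convex_Icc _ _).linear_image (rcmap n m)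
  have hKcomp : IsCompact (rcmap n m '' Cset) :=
    ((isCompact_univ_pi fun i => isCompact_univ_pi fun j => isCompact_Icc)).image hφc
  have hp : ((fun i => r i / 2, fun j => c j / 2) : (Fin n → ℝ) × (Fin m → ℝ))
      ∈ rcmap n m '' Cset := by
    by_contra hp
    obtain ⟨f, α, hfs, hfp⟩ := geometric_hahn_banach_closed_point hKconv hKcomp.isClosed hp
    set uu : Fin n → ℝ := fun i => f ((fun i' => if i = i' then 1 else 0), 0) with huu
    set vv : Fin m → ℝ := fun j => f (0, fun j' => if j = j' then 1 else 0) with hvv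
    have hf : ∀ (w : Fin n → ℝ) (z : Fin m → ℝ),
        f (w, z) = ∑ i, w i * uu i + ∑ j, z j * vv j := fun w z => clm_pair_apply f w z
    set Ymax : Fin n → Fin m → ℝ := fun i j => if 0 < uu i + vv j then X i j else 0 with hYmax
    have hYmem : Ymax ∈ Cset := by
      rw [hmemC]
      intro i j
      by_cases h : 0 < uu i + vv j <;> simp [hYmax, h, hXnn i j, le_refl]
    have hval : f (rcmap n m Ymax) = ∑ i, ∑ j, X i j * max (uu i + vv j) 0 := by
      rw [rcmap_apply, hf]
      have h1 : ∑ i, (∑ j, Ymax i j) * uu i = ∑ i, ∑ j, Ymax i j * uu i :=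
        Finset.sum_congr rfl fun i _ => Finset.sum_mul _ _ _
      have h2 : ∑ j, (∑ i, Ymax i j) * vv j = ∑ i, ∑ j, Ymax i j * vv j := by
        rw [show ∑ j, (∑ i, Ymax i j) * vv j = ∑ j, ∑ i, Ymax i j * vv j from
          Finset.sum_congr rfl fun j _ => Finset.sum_mul _ _ _, Finset.sum_comm]
      rw [h1, h2, ← Finset.sum_add_distrib]
      refine Finset.sum_congr rfl fun i _ => ?_
      rw [← Finset.sum_add_distrib]
      refine Finset.sum_congr rfl fun j _ => ?_
      by_cases h : 0 < uu i + vv j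
      · simp only [hYmax, if_pos h]
        rw [max_eq_left h.le]; ring
      · simp only [hYmax, if_neg h]
        rw [max_eq_right (not_lt.1 h)]; ring
    have h5 := hfs _ (Set.mem_image_of_mem _ hYmem)
    have h6 : f ((fun i => r i / 2, fun j => c j / 2) : (Fin n → ℝ) × (Fin m → ℝ))
        = ∑ i, (r i / 2) * uu i + ∑ j, (c j / 2) * vv j := hf _ _
    have h7 := hdual uu vv
    rw [hval] at h5
    rw [h6] at hfp
    linarith
  obtain ⟨Y, hYC, hYeq⟩ := hp
  rw [hmemC] at hYC
  refine ⟨Matrix.of Y, fun i j => ⟨(hYC i j).1, (hYC i j).2⟩, ?_, ?_⟩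
  · intro i
    have h := congrFun (congrArg Prod.fst hYeq) i
    rw [rcmap_apply] at h
    simpa using h
  · intro j
    have h := congrFun (congrArg Prod.snd hYeq) j
    rw [rcmap_apply] at h
    simpa using h
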